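/- Let h₊ be the discrete Dirichlet Laplacian on ℓ²(ℕ), defined by (h₊u)(n) = u(n+1) + u(n-1) for n ≥ 1 and (h₊u)(0) = u(1). Then for real x with |x| > 2, the matrix element of the resolvent at the boundary site satisfies ⟨δ₀, (h₊ - x)⁻¹ δ₀⟩ = -ζ₁(x), where ζ₁(x) = (x/2)(1 - √(1-4/x²)). -/

import Mathlib

open scoped ENNReal

noncomputable def zeta1 (x : ℝ) : ℝ := x / 2 * (1 - Real.sqrt (1 - 4 / x ^ 2))

/-- ℓ²(ℕ) over ℂ. -/
noncomputable abbrev L2 := lp (fun _ : ℕ => ℂ) 2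

lemma zeta1_quadratic {x : ℝ} (hx : 2 < |x|) :
    zeta1 x ^ 2 - x * zeta1 x + 1 = 0 := by
  have hx2 : (4 : ℝ) < x ^ 2 := by nlinarith [abs_nonneg x, sq_abs x]
  have hx0 : x ^ 2 ≠ 0 := by positivity
  set s := Real.sqrt (1 - 4 / x ^ 2) with hs_def
  have harg : (0:ℝ) ≤ 1 - 4 / x ^ 2 := by
    have : 4 / x ^ 2 < 1 := (div_lt_one (by linarith)).mpr hx2
    linarith
  have hs2 : s ^ 2 = 1 - 4 / x ^ 2 := Real.sq_sqrt harg
  have hs2' : s ^ 2 * x ^ 2 = x ^ 2 - 4 := by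
    rw [hs2, sub_mul, div_mul_cancel₀ (4:ℝ) hx0]; ring
  show (x / 2 * (1 - s)) ^ 2 - x * (x / 2 * (1 - s)) + 1 = 0
  linear_combination (1/4) * hs2'

lemma zeta1_abs_lt_one {x : ℝ} (hx : 2 < |x|) : |zeta1 x| < 1 := by
  have hx2 : (4 : ℝ) < x ^ 2 := by nlinarith [abs_nonneg x, sq_abs x]
  have hx0 : (0:ℝ) < x ^ 2 := by linarith
  set s := Real.sqrt (1 - 4 / x ^ 2) with hs_def
  have harg : (0:ℝ) < 1 - 4 / x ^ 2 := by
    have : 4 / x ^ 2 < 1 := (div_lt_one hx0).mpr hx2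
    linarith
  have hs0 : 0 < s := Real.sqrt_pos.mpr harg
  have hs2 : s ^ 2 = 1 - 4 / x ^ 2 := Real.sq_sqrt harg.le
  have h4 : (0:ℝ) < 4 / x ^ 2 := by positivity
  have hs1 : s < 1 := by nlinarith
  have h1 : x ^ 2 * ((1 - s) * (1 + s)) = 4 := by
    have : (1 - s) * (1 + s) = 4 / x ^ 2 := by nlinarith
    rw [this]; field_simp
    exact div_self (by rintro rfl; norm_num at hx0)
  have hxa : x ^ 2 = |x| ^ 2 := (sq_abs x).symm
  have key : |x| * (1 - s) < 2 := by nlinarith [abs_nonneg x, mul_pos hs0 (abs_pos.mpr (by intro h; rw [h, abs_zero] at hx; linarith : x ≠ 0))]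
  have : |zeta1 x| = |x| * (1 - s) / 2 := by
    show |x / 2 * (1 - s)| = _
    rw [abs_mul, abs_div, abs_of_nonneg (by linarith : (0:ℝ) ≤ 1 - s)]
    norm_num; ring
  rw [this]
  linarith

/-- Boundary matrix element of the resolvent of the half-line Dirichlet Laplacian:
`⟨δ₀, (h₊ - x)⁻¹ δ₀⟩ = -ζ₁(x)` for real `x` with `|x| > 2`. -/
theorem stmt2 (H : L2 →L[ℂ] L2)
    (hH0 : ∀ u : L2, (H u : ∀ _ : ℕ, ℂ) 0 = (u : ∀ _ : ℕ, ℂ) 1)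
    (hHn : ∀ u : L2, ∀ n : ℕ,
      (H u : ∀ _ : ℕ, ℂ) (n + 1) = (u : ∀ _ : ℕ, ℂ) (n + 2) + (u : ∀ _ : ℕ, ℂ) n)
    (x : ℝ) (hx : 2 < |x|)
    (R : L2 →L[ℂ] L2)
    (hR1 : (H - (x : ℂ) • 1) * R = 1) (hR2 : R * (H - (x : ℂ) • 1) = 1) :
    (inner ℂ (lp.single 2 (0 : ℕ) (1 : ℂ)) (R (lp.single 2 (0 : ℕ) (1 : ℂ))) : ℂ)
      = -(zeta1 x : ℝ) := by
  set ζ : ℝ := zeta1 x with hζ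
  have hquad : ζ ^ 2 - x * ζ + 1 = 0 := zeta1_quadratic hx
  have habs : |ζ| < 1 := zeta1_abs_lt_one hx
  set f : ∀ _ : ℕ, ℂ := fun n => -(ζ : ℂ) ^ (n + 1) with hf
  have hmem : Memℓp f 2 := by
    apply memℓp_gen
    have h2 : (2 : ℝ≥0∞).toReal = 2 := by norm_num
    rw [h2]
    have hnorm : ∀ n : ℕ, ‖f n‖ ^ (2:ℝ) = (|ζ| ^ 2) ^ (n + 1) := by
      intro n
      simp only [hf, norm_neg, norm_pow, Real.rpow_two, Complex.norm_real,
        Real.norm_eq_abs]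
      ring
    simp only [hnorm]
    have hg : Summable (fun n : ℕ => (|ζ| ^ 2) ^ n) :=
      summable_geometric_of_lt_one (by positivity) (by nlinarith [abs_nonneg ζ])
    have heq : (fun n : ℕ => (|ζ| ^ 2) ^ (n + 1))
        = fun n : ℕ => (|ζ| ^ 2) ^ n * (|ζ| ^ 2) := by
      funext n; rw [pow_succ]
    rw [heq]
    exact hg.mul_right _
  set v : L2 := ⟨f, hmem⟩ with hv
  have hvcoe : ∀ n, (v : ∀ _ : ℕ, ℂ) n = -(ζ : ℂ) ^ (n + 1) := fun n => rfl
  have hquadC : (ζ : ℂ) ^ 2 - (x : ℂ) * (ζ : ℂ) + 1 = 0 := by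
    exact_mod_cast congrArg (Complex.ofReal) hquad
  have hHv : (H - (x : ℂ) • 1) v = lp.single 2 (0 : ℕ) (1 : ℂ) := by
    apply lp.ext
    funext n
    have hcoe : ((H - (x : ℂ) • 1) v : ∀ _ : ℕ, ℂ) n
        = (H v : ∀ _ : ℕ, ℂ) n - (x : ℂ) * (v : ∀ _ : ℕ, ℂ) n := by
      rw [ContinuousLinearMap.sub_apply, ContinuousLinearMap.smul_apply,
        ContinuousLinearMap.one_apply]
      rw [lp.coeFn_sub, Pi.sub_apply, lp.coeFn_smul, Pi.smul_apply]
      simp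
    rw [hcoe]
    cases n with
    | zero =>
      rw [hH0 v, hvcoe, hvcoe, lp.single_apply_self]
      simp only [pow_one]
      linear_combination -hquadC
    | succ m =>
      rw [hHn v m, hvcoe, hvcoe, hvcoe, lp.single_apply_ne 2 0 1 (by omega : m + 1 ≠ 0)]
      have : (ζ:ℂ) ^ (m + 2 + 1) + (ζ:ℂ) ^ (m+1) - (ζ:ℂ) ^ (m + 1 + 1) * x
          = (ζ:ℂ)^(m+1) * ((ζ:ℂ)^2 - x * ζ + 1) := by ring
      linear_combination -this - (ζ:ℂ)^(m+1) * hquadC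
  have hRδ : R (lp.single 2 (0 : ℕ) (1 : ℂ)) = v := by
    have h := congrArg (fun T : L2 →L[ℂ] L2 => T v) hR2
    simp only [ContinuousLinearMap.mul_apply, ContinuousLinearMap.one_apply] at h
    rw [hHv] at h
    exact h
  rw [hRδ]
  rw [lp.inner_single_left]
  have : (inner ℂ (1:ℂ) ((v : ∀ _ : ℕ, ℂ) 0) : ℂ) = (v : ∀ _ : ℕ, ℂ) 0 := by
    simp [RCLike.inner_apply]
  rw [this, hvcoe]
  simp
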